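/- arXiv:1005.0298 — 3 statements merged into one kernel-verified Lean document; each statement's English description precedes it below -/
import Mathlib

section
/- Let μ, ω > 0. Suppose u, v : ℝ → ℝ are twice differentiable with u(0) = u'(0) = 0, v(0) = v'(0) = 0, u''(t) = −μ²·u(t) + cos(ωt) for all t, and v''(t) = −ω²·v(t) + cos(μt) for all t. Then u(t) = v(t) for all t ∈ ℝ. (Swap symmetry of zero-data forced oscillators: exchanging the eigenfrequency and the forcing frequency leaves the solution unchanged; this is the single-mode content of the equivalence between the source-identification system and the cascaded homogeneous-wave/oscillator system.) -/
open Real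

lemma zero_sol (k : ℝ) (hk : 0 < k) (d : ℝ → ℝ)
    (hd1 : ∀ t : ℝ, DifferentiableAt ℝ d t)
    (hd2 : ∀ t : ℝ, DifferentiableAt ℝ (deriv d) t)
    (h0 : d 0 = 0) (h0' : deriv d 0 = 0)
    (hode : ∀ t : ℝ, deriv (deriv d) t = -k ^ 2 * d t) :
    ∀ t : ℝ, d t = 0 := by
  have hE : ∀ t : ℝ, HasDerivAt (fun s => (deriv d s) ^ 2 + k ^ 2 * (d s) ^ 2) 0 t := by
    intro t
    have h1 : HasDerivAt (deriv d) (-k ^ 2 * d t) t := by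
      rw [← hode t]; exact (hd2 t).hasDerivAt
    have h2 : HasDerivAt d (deriv d t) t := (hd1 t).hasDerivAt
    have := (h1.pow 2).add ((h2.pow 2).const_mul (k ^ 2))
    convert this using 1
    · rfl
    · rfl
    · rfl
    ring
  have hconst := is_const_of_deriv_eq_zero (fun t => (hE t).differentiableAt)
    (fun t => (hE t).deriv)
  intro t
  have h := hconst t 0
  simp only [h0, h0'] at h
  have hk2 : 0 < k ^ 2 := pow_pos hk 2
  have hsq : (d t) ^ 2 = 0 := by nlinarith [sq_nonneg (deriv d t), sq_nonneg (d t)]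
  exact pow_eq_zero_iff two_ne_zero |>.mp hsq

lemma osc_unique (k : ℝ) (hk : 0 < k) (f y z : ℝ → ℝ)
    (hy1 : ∀ t : ℝ, DifferentiableAt ℝ y t)
    (hy2 : ∀ t : ℝ, DifferentiableAt ℝ (deriv y) t)
    (hz1 : ∀ t : ℝ, DifferentiableAt ℝ z t)
    (hz2 : ∀ t : ℝ, DifferentiableAt ℝ (deriv z) t)
    (hy0 : y 0 = z 0) (hy0' : deriv y 0 = deriv z 0)
    (hodey : ∀ t : ℝ, deriv (deriv y) t = -k ^ 2 * y t + f t)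
    (hodez : ∀ t : ℝ, deriv (deriv z) t = -k ^ 2 * z t + f t) :
    ∀ t : ℝ, y t = z t := by
  have hdd : ∀ t : ℝ, deriv (fun s => y s - z s) t = deriv y t - deriv z t := by
    intro t; exact deriv_sub (hy1 t) (hz1 t)
  have key := zero_sol k hk (fun s => y s - z s)
    (fun t => (hy1 t).sub (hz1 t))
    (by
      intro t
      have : deriv (fun s => y s - z s) = fun s => deriv y s - deriv z s := funext hdd
      rw [this]
      exact (hy2 t).sub (hz2 t))
    (by simp [hy0]) (by simp [hdd 0, hy0'])
    (by
      intro t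
      have h1 : deriv (fun s => y s - z s) = fun s => deriv y s - deriv z s := funext hdd
      rw [h1, deriv_fun_sub (hy2 t) (hz2 t), hodey t, hodez t]
      ring)
  intro t
  have h := key t
  linarith

lemma hd_cos (a t : ℝ) :
    HasDerivAt (fun s : ℝ => Real.cos (a * s)) (-(a * Real.sin (a * t))) t := by
  simpa [mul_comm, Function.comp_def] using (Real.hasDerivAt_cos (a * t)).comp t ((hasDerivAt_id t).const_mul a)

lemma hd_sin (a t : ℝ) :
    HasDerivAt (fun s : ℝ => Real.sin (a * s)) (a * Real.cos (a * t)) t := by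
  simpa [mul_comm, Function.comp_def] using (Real.hasDerivAt_sin (a * t)).comp t ((hasDerivAt_id t).const_mul a)

/-- Swap symmetry of zero-data forced oscillators: exchanging the eigenfrequency `μ`
and the forcing frequency `ω` leaves the solution with zero initial data unchanged. -/
theorem forced_oscillator_swap_symmetry (μ ω : ℝ) (hμ : 0 < μ) (hω : 0 < ω)
    (u v : ℝ → ℝ)
    (hu1 : ∀ t : ℝ, DifferentiableAt ℝ u t)
    (hu2 : ∀ t : ℝ, DifferentiableAt ℝ (deriv u) t)
    (hv1 : ∀ t : ℝ, DifferentiableAt ℝ v t)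
    (hv2 : ∀ t : ℝ, DifferentiableAt ℝ (deriv v) t)
    (hu0 : u 0 = 0) (hu0' : deriv u 0 = 0)
    (hv0 : v 0 = 0) (hv0' : deriv v 0 = 0)
    (hodeu : ∀ t : ℝ, deriv (deriv u) t = -μ ^ 2 * u t + Real.cos (ω * t))
    (hodev : ∀ t : ℝ, deriv (deriv v) t = -ω ^ 2 * v t + Real.cos (μ * t)) :
    ∀ t : ℝ, u t = v t := by
  by_cases hmw : μ = ω
  · subst hmw
    exact osc_unique μ hμ (fun t => Real.cos (μ * t)) u v hu1 hu2 hv1 hv2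
      (by rw [hu0, hv0]) (by rw [hu0', hv0']) hodeu hodev
  · -- explicit common solution
    have ha : μ ^ 2 - ω ^ 2 ≠ 0 := by
      intro h
      apply hmw
      nlinarith [sq_nonneg (μ - ω), sq_nonneg (μ + ω)]
    set a := μ ^ 2 - ω ^ 2 with ha_def
    set c : ℝ → ℝ := fun t => (Real.cos (ω * t) - Real.cos (μ * t)) / a with hc_def
    have hdc : ∀ t, HasDerivAt c ((μ * Real.sin (μ * t) - ω * Real.sin (ω * t)) / a) t := by
      intro t
      have := ((hd_cos ω t).sub (hd_cos μ t)).div_const a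
      convert this using 1
      · rfl
      · rfl
      · rfl
      ring
    have hcderiv : deriv c = fun t => (μ * Real.sin (μ * t) - ω * Real.sin (ω * t)) / a :=
      funext fun t => (hdc t).deriv
    have hdc2 : ∀ t, HasDerivAt (deriv c)
        ((μ ^ 2 * Real.cos (μ * t) - ω ^ 2 * Real.cos (ω * t)) / a) t := by
      intro t
      rw [hcderiv]
      have := (((hd_sin μ t).const_mul μ).sub ((hd_sin ω t).const_mul ω)).div_const a
      convert this using 1
      · rfl
      · rfl
      · rfl
      ring
    have hc1 : ∀ t : ℝ, DifferentiableAt ℝ c t := fun t => (hdc t).differentiableAt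
    have hc2 : ∀ t : ℝ, DifferentiableAt ℝ (deriv c) t := fun t => (hdc2 t).differentiableAt
    have hc0 : c 0 = 0 := by simp [hc_def]
    have hc0' : deriv c 0 = 0 := by rw [hcderiv]; simp
    have hcc2 : ∀ t, deriv (deriv c) t
        = (μ ^ 2 * Real.cos (μ * t) - ω ^ 2 * Real.cos (ω * t)) / a :=
      fun t => (hdc2 t).deriv
    have hodec1 : ∀ t : ℝ, deriv (deriv c) t = -μ ^ 2 * c t + Real.cos (ω * t) := by
      intro t
      rw [hcc2, hc_def]
      field_simp
      ring
    have hodec2 : ∀ t : ℝ, deriv (deriv c) t = -ω ^ 2 * c t + Real.cos (μ * t) := by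
      intro t
      rw [hcc2, hc_def]
      field_simp
      ring
    have huc := osc_unique μ hμ (fun t => Real.cos (ω * t)) u c hu1 hu2 hc1 hc2
      (by rw [hu0, hc0]) (by rw [hu0', hc0']) hodeu hodec1
    have hvc := osc_unique ω hω (fun t => Real.cos (μ * t)) v c hv1 hv2 hc1 hc2
      (by rw [hv0, hc0]) (by rw [hv0', hc0']) hodev hodec2
    intro t
    rw [huc t, hvc t]
end

section
/- Let ω > 0 with ω ≠ π and ω ≠ 2π. Then there exist real numbers q₁, q₂ not both zero and twice differentiable functions u₁, u₂ : ℝ → ℝ such that u₁''(t) = −π²·u₁(t) + q₁·cos(ωt) and u₂''(t) = −4π²·u₂(t) + q₂·cos(ωt) for all t, and the output π·u₁(t) + 2π·u₂(t) equals 0 for all t ∈ ℝ. (Non-observability of the six-dimensional two-mode system with unknown initial state and unknown source parameters: a nonzero state–parameter configuration produces identically zero output.) -/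
open Real

lemma deriv_cos_mul (ω t : ℝ) :
    deriv (fun s : ℝ => Real.cos (ω * s)) t = -ω * Real.sin (ω * t) := by
  have : deriv (fun s : ℝ => Real.cos (ω * s)) t
      = -Real.sin (ω * t) * ω := by
    have h1 : HasDerivAt (fun s : ℝ => ω * s) ω t := by
      simpa using (hasDerivAt_id t).const_mul ω
    have := (Real.hasDerivAt_cos (ω * t)).comp t h1
    exact this.deriv
  linarith [this]

lemma deriv2_cos_mul (ω : ℝ) :
    deriv (deriv (fun s : ℝ => Real.cos (ω * s))) = fun t => -ω ^ 2 * Real.cos (ω * t) := by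
  funext t
  have hd : deriv (fun s : ℝ => Real.cos (ω * s)) = fun s => -ω * Real.sin (ω * s) := by
    funext s; exact deriv_cos_mul ω s
  rw [hd]
  have h1 : HasDerivAt (fun s : ℝ => ω * s) ω t := by
    simpa using (hasDerivAt_id t).const_mul ω
  have h2 : HasDerivAt (fun s : ℝ => -ω * Real.sin (ω * s)) (-ω * (Real.cos (ω * t) * ω)) t :=
    ((Real.hasDerivAt_sin (ω * t)).comp t h1).const_mul (-ω)
  rw [h2.deriv]; ring

lemma diff_cos_mul (ω t : ℝ) : DifferentiableAt ℝ (fun s : ℝ => Real.cos (ω * s)) t := by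
  have h1 : HasDerivAt (fun s : ℝ => ω * s) ω t := by
    simpa using (hasDerivAt_id t).const_mul ω
  exact ((Real.hasDerivAt_cos (ω * t)).comp t h1).differentiableAt

lemma diff_deriv_cos_mul (ω t : ℝ) :
    DifferentiableAt ℝ (deriv (fun s : ℝ => Real.cos (ω * s))) t := by
  have hd : deriv (fun s : ℝ => Real.cos (ω * s)) = fun s => -ω * Real.sin (ω * s) := by
    funext s; exact deriv_cos_mul ω s
  rw [hd]
  have h1 : HasDerivAt (fun s : ℝ => ω * s) ω t := by
    simpa using (hasDerivAt_id t).const_mul ω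
  exact (((Real.hasDerivAt_sin (ω * t)).comp t h1).const_mul (-ω)).differentiableAt

/-- Non-observability of the two-mode system with unknown initial state and unknown
source parameters: some nonzero state–parameter configuration produces identically
zero output `π u₁(t) + 2π u₂(t)`. -/
theorem two_mode_system_not_observable (ω : ℝ) (hω : 0 < ω) (hω1 : ω ≠ π)
    (hω2 : ω ≠ 2 * π) :
    ∃ (q₁ q₂ : ℝ) (u₁ u₂ : ℝ → ℝ),
      (q₁ ≠ 0 ∨ q₂ ≠ 0)
      ∧ (∀ t : ℝ, DifferentiableAt ℝ u₁ t)
      ∧ (∀ t : ℝ, DifferentiableAt ℝ (deriv u₁) t)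
      ∧ (∀ t : ℝ, DifferentiableAt ℝ u₂ t)
      ∧ (∀ t : ℝ, DifferentiableAt ℝ (deriv u₂) t)
      ∧ (∀ t : ℝ, deriv (deriv u₁) t = -π ^ 2 * u₁ t + q₁ * Real.cos (ω * t))
      ∧ (∀ t : ℝ, deriv (deriv u₂) t = -(4 * π ^ 2) * u₂ t + q₂ * Real.cos (ω * t))
      ∧ (∀ t : ℝ, π * u₁ t + 2 * π * u₂ t = 0) := by
  refine ⟨π ^ 2 - ω ^ 2, -(1/2) * (4 * π ^ 2 - ω ^ 2),
    (fun t => Real.cos (ω * t)), (fun t => -(1/2) * Real.cos (ω * t)), ?_, ?_, ?_, ?_, ?_, ?_, ?_, ?_⟩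
  · left
    have : ω ≠ -π := by
      intro h; have := Real.pi_pos; linarith [h ▸ hω]
    intro h
    have h' : (π - ω) * (π + ω) = 0 := by ring_nf; nlinarith [h]
    rcases mul_eq_zero.1 h' with h'' | h''
    · exact hω1 (by linarith)
    · exact this (by linarith)
  · exact diff_cos_mul ω
  · exact diff_deriv_cos_mul ω
  · intro t
    exact (diff_cos_mul ω t).const_mul _
  · intro t
    have hd : deriv (fun s : ℝ => -(1/2 : ℝ) * Real.cos (ω * s))
        = fun s => -(1/2 : ℝ) * deriv (fun s : ℝ => Real.cos (ω * s)) s := by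
      funext s
      rw [deriv_const_mul _ (diff_cos_mul ω s)]
    rw [hd]
    exact ((diff_deriv_cos_mul ω t).const_mul _)
  · intro t
    rw [deriv2_cos_mul]
    ring
  · intro t
    have hd : deriv (fun s : ℝ => -(1/2 : ℝ) * Real.cos (ω * s))
        = fun s => -(1/2 : ℝ) * deriv (fun s : ℝ => Real.cos (ω * s)) s := by
      funext s
      rw [deriv_const_mul _ (diff_cos_mul ω s)]
    rw [hd]
    have hd2 : deriv (fun s => -(1/2 : ℝ) * deriv (fun s : ℝ => Real.cos (ω * s)) s) t
        = -(1/2 : ℝ) * deriv (deriv (fun s : ℝ => Real.cos (ω * s))) t := by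
      rw [deriv_const_mul _ (diff_deriv_cos_mul ω t)]
    rw [hd2, deriv2_cos_mul]
    ring
  · intro t; ring
end

section
/- Let ω > 0 with ω ≠ π and ω ≠ 2π, let T > 0 and q₁, q₂ ∈ ℝ. Suppose u₁, u₂ : ℝ → ℝ are twice differentiable with u₁(0) = u₁'(0) = u₂(0) = u₂'(0) = 0, u₁''(t) = −π²·u₁(t) + q₁·cos(ωt) and u₂''(t) = −4π²·u₂(t) + q₂·cos(ωt) for all t, and that π·u₁(t) + 2π·u₂(t) = 0 for all t ∈ [0,T]. Then q₁ = 0 and q₂ = 0. (With known zero initial state, the two source parameters of the two-mode system are identifiable from the output.) -/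
open Real Filter Set

/-- Identifiability of the two source parameters of the two-mode system from the
output, given known zero initial state. -/
theorem two_mode_system_identifiable (ω : ℝ) (hω : 0 < ω) (hω1 : ω ≠ π)
    (hω2 : ω ≠ 2 * π) (T : ℝ) (hT : 0 < T) (q₁ q₂ : ℝ) (u₁ u₂ : ℝ → ℝ)
    (hu₁1 : ∀ t : ℝ, DifferentiableAt ℝ u₁ t)
    (hu₁2 : ∀ t : ℝ, DifferentiableAt ℝ (deriv u₁) t)
    (hu₂1 : ∀ t : ℝ, DifferentiableAt ℝ u₂ t)
    (hu₂2 : ∀ t : ℝ, DifferentiableAt ℝ (deriv u₂) t)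
    (h₁0 : u₁ 0 = 0) (h₁0' : deriv u₁ 0 = 0)
    (h₂0 : u₂ 0 = 0) (h₂0' : deriv u₂ 0 = 0)
    (hode₁ : ∀ t : ℝ, deriv (deriv u₁) t = -π ^ 2 * u₁ t + q₁ * Real.cos (ω * t))
    (hode₂ : ∀ t : ℝ, deriv (deriv u₂) t = -(4 * π ^ 2) * u₂ t + q₂ * Real.cos (ω * t))
    (hout : ∀ t ∈ Set.Icc (0:ℝ) T, π * u₁ t + 2 * π * u₂ t = 0) :
    q₁ = 0 ∧ q₂ = 0 := by
  have hπ : (0:ℝ) < π := Real.pi_pos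
  set v : ℝ → ℝ := fun t => π * u₁ t + 2 * π * u₂ t with hv
  have hdv : deriv v = fun t => π * deriv u₁ t + 2 * π * deriv u₂ t := by
    funext t
    simp only [hv]
    rw [deriv_fun_add ((hu₁1 t).const_mul _) ((hu₂1 t).const_mul _),
        deriv_const_mul _ (hu₁1 t), deriv_const_mul _ (hu₂1 t)]
  have hddv : ∀ t, deriv (deriv v) t
      = π * deriv (deriv u₁) t + 2 * π * deriv (deriv u₂) t := by
    intro t
    rw [hdv, deriv_fun_add ((hu₁2 t).const_mul _) ((hu₂2 t).const_mul _),
        deriv_const_mul _ (hu₁2 t), deriv_const_mul _ (hu₂2 t)]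
  have hvz : ∀ t ∈ Ioo (0:ℝ) T, v t = 0 := fun t ht => hout t (Ioo_subset_Icc_self ht)
  have hdvz : ∀ t ∈ Ioo (0:ℝ) T, deriv v t = 0 := by
    intro t ht
    have h1 : v =ᶠ[nhds t] (fun _ => (0:ℝ)) :=
      Filter.eventuallyEq_of_mem (isOpen_Ioo.mem_nhds ht) hvz
    rw [h1.deriv_eq, deriv_const]
  have hddvz : ∀ t ∈ Ioo (0:ℝ) T, deriv (deriv v) t = 0 := by
    intro t ht
    have h1 : deriv v =ᶠ[nhds t] (fun _ => (0:ℝ)) :=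
      Filter.eventuallyEq_of_mem (isOpen_Ioo.mem_nhds ht) hdvz
    rw [h1.deriv_eq, deriv_const]
  set c : ℝ := (q₁ + 2 * q₂) / (6 * π ^ 2) with hc
  have key : ∀ t ∈ Ioo (0:ℝ) T, u₂ t = c * Real.cos (ω * t) := by
    intro t ht
    have h0 := hvz t ht
    have h2 := hddvz t ht
    rw [hddv t, hode₁ t, hode₂ t] at h2
    simp only [hv] at h0
    have hu1 : u₁ t = -2 * u₂ t := by
      have hx : π * (u₁ t + 2 * u₂ t) = 0 := by linear_combination h0
      have := (mul_eq_zero.mp hx).resolve_left (ne_of_gt hπ)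
      linarith
    rw [hu1] at h2
    have h2' : -(6*π^3) * u₂ t + π*(q₁+2*q₂)*Real.cos (ω*t) = 0 := by
      linear_combination h2
    rw [hc, div_mul_eq_mul_div, eq_div_iff (by positivity : (6:ℝ)*π^2 ≠ 0)]
    have h3 : π * (u₂ t * (6*π^2)) = π * ((q₁+2*q₂) * Real.cos (ω*t)) := by
      linear_combination -h2'
    exact mul_left_cancel₀ (ne_of_gt hπ) h3
  -- continuity at 0 forces c = 0
  have hmem : Ioo (0:ℝ) T ∈ nhdsWithin (0:ℝ) (Ioi 0) :=
    Ioo_mem_nhdsGT_of_mem ⟨le_refl 0, hT⟩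
  have heq : u₂ =ᶠ[nhdsWithin (0:ℝ) (Ioi 0)] fun t => c * Real.cos (ω*t) :=
    Filter.eventuallyEq_of_mem hmem key
  have hten1 : Tendsto u₂ (nhdsWithin (0:ℝ) (Ioi 0)) (nhds 0) := by
    have := (hu₂1 0).continuousAt.tendsto
    rw [h₂0] at this
    exact this.mono_left nhdsWithin_le_nhds
  have hten2 : Tendsto (fun t => c * Real.cos (ω*t)) (nhdsWithin (0:ℝ) (Ioi 0)) (nhds c) := by
    have hcont : Continuous (fun t : ℝ => c * Real.cos (ω*t)) :=
      continuous_const.mul (Real.continuous_cos.comp (continuous_const.mul continuous_id))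
    have := hcont.tendsto 0
    simp only [mul_zero, Real.cos_zero, mul_one] at this
    exact this.mono_left nhdsWithin_le_nhds
  have hc0 : c = 0 := tendsto_nhds_unique (hten2.congr' heq.symm) hten1
  -- so u₂ vanishes on (0,T)
  have hu₂z : ∀ t ∈ Ioo (0:ℝ) T, u₂ t = 0 := by
    intro t ht; rw [key t ht, hc0, zero_mul]
  have hdu₂z : ∀ t ∈ Ioo (0:ℝ) T, deriv u₂ t = 0 := by
    intro t ht
    have h1 : u₂ =ᶠ[nhds t] (fun _ => (0:ℝ)) :=
      Filter.eventuallyEq_of_mem (isOpen_Ioo.mem_nhds ht) hu₂z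
    rw [h1.deriv_eq, deriv_const]
  have hddu₂z : ∀ t ∈ Ioo (0:ℝ) T, deriv (deriv u₂) t = 0 := by
    intro t ht
    have h1 : deriv u₂ =ᶠ[nhds t] (fun _ => (0:ℝ)) :=
      Filter.eventuallyEq_of_mem (isOpen_Ioo.mem_nhds ht) hdu₂z
    rw [h1.deriv_eq, deriv_const]
  -- evaluate the ODE at a point with cos(ωt) ≠ 0
  set t₀ : ℝ := min (T/2) (1/ω) with ht₀
  have ht₀pos : 0 < t₀ := lt_min (by linarith) (by positivity)
  have ht₀mem : t₀ ∈ Ioo (0:ℝ) T :=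
    ⟨ht₀pos, lt_of_le_of_lt (min_le_left _ _) (by linarith)⟩
  have hωt₀ : ω * t₀ ≤ 1 := by
    have h1 : t₀ ≤ 1/ω := min_le_right _ _
    calc ω * t₀ ≤ ω * (1/ω) := by nlinarith
    _ = 1 := by field_simp
  have hcospos : 0 < Real.cos (ω * t₀) := by
    apply Real.cos_pos_of_mem_Ioo
    constructor
    · have := Real.pi_gt_three
      nlinarith [mul_pos hω ht₀pos]
    · have := Real.pi_gt_three
      nlinarith
  have hq₂ : q₂ = 0 := by
    have h := hode₂ t₀
    rw [hddu₂z t₀ ht₀mem, hu₂z t₀ ht₀mem] at h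
    have : q₂ * Real.cos (ω * t₀) = 0 := by linarith
    rcases mul_eq_zero.mp this with h | h
    · exact h
    · exact absurd h (ne_of_gt hcospos)
  have hq₁ : q₁ = 0 := by
    rw [hc] at hc0
    have h6 : (6:ℝ) * π ^ 2 ≠ 0 := by positivity
    have := (div_eq_zero_iff.mp hc0).resolve_right h6
    linarith
  exact ⟨hq₁, hq₂⟩
end
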